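/- For every positive integer N, the truncated Schur Q-multiple zeta function of a one-row shape (r) satisfies ζ_{(r)}^{Q,N}(s_1,...,s_r) = Σ_{ℓ} (-1)^{r - dep(ℓ)} 2^{dep(ℓ)} ζ^{⋆,N}(ℓ), where ℓ ranges over all compositions obtained from (s_1,...,s_r) by replacing each separator by a comma or a plus, and ζ^{⋆,N}(t_1,...,t_k) = Σ_{0 < m_1 ≤ ... ≤ m_k ≤ N} m_1^{-t_1}···m_k^{-t_k} is the truncated multiple zeta star function. -/

import Mathlib

noncomputable section

/-! Marked letters `{1' < 1 < 2' < 2 < ⋯}` are encoded by positive integer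
ranks: `i' = 2i-1` (odd), `i = 2i` (even), `|rank| = (rank+1)/2`. -/

/-- Replace each separator of the index `(a, b_1, …, b_m)` by a comma
(`true`) or a plus (`false`), producing the resulting composition. -/
def fillIndex : ℂ → List (Bool × ℂ) → List ℂ
  | a, [] => [a]
  | a, (true, b) :: rest => a :: fillIndex b rest
  | a, (false, b) :: rest => fillIndex (a + b) rest

/-- Truncated multiple zeta star value with summation starting at `lo`:
`∑_{lo ≤ m_1 ≤ m_2 ≤ ⋯ ≤ N} ∏ m_i^{-t_i}`. -/
def zetaStarNfrom (N : ℕ) : ℕ → List ℂ → ℂ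
  | _, [] => 1
  | lo, t :: rest => ∑ m ∈ Finset.Icc lo N, (m : ℂ) ^ (-t) * zetaStarNfrom N m rest

/-- The truncated multiple zeta star function
`ζ^{⋆,N}(t_1,…,t_k) = ∑_{0 < m_1 ≤ ⋯ ≤ m_k ≤ N} m_1^{-t_1} ⋯ m_k^{-t_k}`. -/
def zetaStarN (N : ℕ) (l : List ℂ) : ℂ := zetaStarNfrom N 1 l

/-- The truncated one-row Schur `Q`-multiple zeta function
`ζ_{(r)}^{Q,N}(s_1,…,s_r)`: the sum over one-row semi-standard marked shifted
tableaux (weakly increasing sequences of marked letters `≤ N` with no repeated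
primed letter) of `∏ |m_i|^{-s_i}`. -/
def zetaQrowN (N r : ℕ) (s : Fin r → ℂ) : ℂ :=
  ∑' M : {M : Fin r → ℕ // (∀ i, 1 ≤ M i ∧ M i ≤ 2 * N) ∧ Monotone M ∧
      (∀ i j, i ≠ j → M i = M j → ¬ Odd (M i))},
    ∏ i, ((((M.1 i + 1) / 2 : ℕ)) : ℂ) ^ (-(s i))


def nxt (k : ℕ) : ℕ := if Odd k then k + 1 else k

def Uu (N : ℕ) : ℕ → ℂ → List ℂ → ℂ
  | lo, a, [] => ∑ m ∈ Finset.Icc lo N, (m : ℂ) ^ (-a)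
  | lo, a, b :: bs => 2 * ∑ m ∈ Finset.Icc lo N, (m : ℂ) ^ (-a) * Uu N m b bs
      - Uu N lo (a + b) bs

def Fx (N : ℕ) : ℕ → ℂ → List ℂ → ℂ
  | m, a, [] => (m : ℂ) ^ (-a)
  | m, a, b :: bs => 2 * (m : ℂ) ^ (-a) * Uu N m b bs - Fx N m (a + b) bs

def Vv (N : ℕ) : ℕ → List ℂ → ℂ
  | _, [] => 1
  | ρ, a :: bs => ∑ k ∈ Finset.Icc ρ (2 * N),
      (((k + 1) / 2 : ℕ) : ℂ) ^ (-a) * Vv N (nxt k) bs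

lemma cpow_weight {m : ℕ} (hm : 1 ≤ m) (a b : ℂ) :
    (m : ℂ) ^ (-a) * (m : ℂ) ^ (-b) = (m : ℂ) ^ (-(a + b)) := by
  rw [neg_add, Complex.cpow_add]
  exact_mod_cast Nat.one_le_iff_ne_zero.mp hm

lemma Fx_shift (N : ℕ) (bs : List ℂ) : ∀ (m : ℕ), 1 ≤ m → ∀ (a b : ℂ),
    (m : ℂ) ^ (-a) * Fx N m b bs = Fx N m (a + b) bs := by
  induction bs with
  | nil => intro m hm a b; simpa [Fx] using cpow_weight hm a b
  | cons c bs ih =>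
    intro m hm a b
    simp only [Fx, mul_sub]
    rw [ih m hm a (b + c), ← add_assoc, ← cpow_weight hm a b]
    ring

lemma Uu_eq_sum_Fx (N : ℕ) (bs : List ℂ) : ∀ (lo : ℕ) (a : ℂ),
    Uu N lo a bs = ∑ m ∈ Finset.Icc lo N, Fx N m a bs := by
  induction bs with
  | nil => intro lo a; simp [Uu, Fx]
  | cons b bs ih =>
    intro lo a
    simp only [Uu, Fx, ih, Finset.mul_sum, Finset.sum_sub_distrib]
    congr 1
    · exact Finset.sum_congr rfl fun m _ =>
        Finset.sum_congr rfl fun x _ => by ring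

lemma sum_split (f : ℕ → ℂ) (m : ℕ) (hm : 1 ≤ m) : ∀ N : ℕ,
    ∑ k ∈ Finset.Icc (2 * m - 1) (2 * N), f k
      = ∑ j ∈ Finset.Icc m N, (f (2 * j - 1) + f (2 * j)) := by
  intro N
  induction N with
  | zero =>
    rw [Finset.Icc_eq_empty (by omega), Finset.Icc_eq_empty (by omega), Finset.sum_empty,
      Finset.sum_empty]
  | succ N ih =>
    by_cases h : m ≤ N + 1
    · have h1 : 2 * (N + 1) = (2 * N + 1) + 1 := by ring
      have h2 : ∑ k ∈ Finset.Icc (2*m-1) (2*(N+1)), f k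
          = ∑ k ∈ Finset.Icc (2*m-1) (2*N), f k + f (2*N+1) + f (2*N+2) := by
        rw [h1, ← Finset.Ico_add_one_right_eq_Icc, Finset.sum_Ico_succ_top (by omega),
          Finset.sum_Ico_succ_top (by omega), Finset.Ico_add_one_right_eq_Icc]
      have h3 : ∑ j ∈ Finset.Icc m (N+1), (f (2*j-1) + f (2*j))
          = ∑ j ∈ Finset.Icc m N, (f (2*j-1) + f (2*j)) + (f (2*(N+1)-1) + f (2*(N+1))) := by
        rw [← Finset.Ico_add_one_right_eq_Icc, Finset.sum_Ico_succ_top (by omega), Finset.Ico_add_one_right_eq_Icc]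
      rw [h2, h3, ih]
      have e1 : 2 * (N + 1) - 1 = 2 * N + 1 := by omega
      have e2 : 2 * (N + 1) = 2 * N + 2 := by omega
      rw [e1, e2]; ring
    · rw [Finset.Icc_eq_empty (by omega), Finset.Icc_eq_empty (by omega), Finset.sum_empty,
        Finset.sum_empty]

lemma sum_split_even (f : ℕ → ℂ) (m N : ℕ) (hm : 1 ≤ m) (hmN : m ≤ N) :
    ∑ k ∈ Finset.Icc (2 * m) (2 * N), f k
      = ∑ k ∈ Finset.Icc (2 * m - 1) (2 * N), f k - f (2 * m - 1) := by
  have h : 2 * m - 1 + 1 = 2 * m := by omega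
  have : ∑ k ∈ Finset.Icc (2*m-1) (2*N), f k
      = f (2*m-1) + ∑ k ∈ Finset.Icc (2*m) (2*N), f k := by
    rw [← h, Finset.Icc_add_one_left_eq_Ioc, ← Finset.Ioc_insert_left (by omega),
      Finset.sum_insert (by simp)]
    simp
  rw [this]; ring

lemma weight1 (j : ℕ) (hj : 1 ≤ j) : ((2 * j - 1 + 1) / 2 : ℕ) = j := by omega
lemma weight2 (j : ℕ) : ((2 * j + 1) / 2 : ℕ) = j := by omega
lemma nxt_odd (j : ℕ) (hj : 1 ≤ j) : nxt (2 * j - 1) = 2 * j := by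
  have : Odd (2 * j - 1) := ⟨j - 1, by omega⟩
  rw [nxt, if_pos this]; omega
lemma nxt_even (j : ℕ) : nxt (2 * j) = 2 * j := by
  rw [nxt, if_neg]; simp

lemma Vv_eq (N : ℕ) (bs : List ℂ) : ∀ (a : ℂ) (m : ℕ), 1 ≤ m →
    Vv N (2 * m - 1) (a :: bs) = 2 * Uu N m a bs ∧
    (m ≤ N → Vv N (2 * m) (a :: bs) = 2 * Uu N m a bs - Fx N m a bs) := by
  induction bs with
  | nil =>
    intro a m hm
    constructor
    · rw [Vv, sum_split _ m hm N, Uu, Finset.mul_sum]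
      apply Finset.sum_congr rfl; intro j hj
      have hj1 : 1 ≤ j := le_trans hm (Finset.mem_Icc.mp hj).1
      simp only [weight1 j hj1, weight2 j, Vv]; ring
    · intro hmN
      rw [Vv, sum_split_even _ m N hm hmN, sum_split _ m hm N, Uu, Fx, Finset.mul_sum,
        weight1 m hm, Vv, mul_one]
      congr 1
      apply Finset.sum_congr rfl; intro j hj
      have hj1 : 1 ≤ j := le_trans hm (Finset.mem_Icc.mp hj).1
      simp only [weight1 j hj1, weight2 j, Vv]; ring
  | cons b bs ih =>
    intro a m hm
    have key : ∀ m', 1 ≤ m' → Vv N (2 * m' - 1) (a :: b :: bs)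
        = 2 * Uu N m' a (b :: bs) := by
      intro m' hm'
      rw [Vv, sum_split _ m' hm' N]
      have step : ∀ j ∈ Finset.Icc m' N,
          (((2*j-1+1)/2 : ℕ) : ℂ) ^ (-a) * Vv N (nxt (2*j-1)) (b :: bs)
            + (((2*j+1)/2 : ℕ) : ℂ) ^ (-a) * Vv N (nxt (2*j)) (b :: bs)
          = 2 * (2 * ((j : ℂ) ^ (-a) * Uu N j b bs) - (j:ℂ)^(-a) * Fx N j b bs) := by
        intro j hj
        obtain ⟨hj1, hj2⟩ := Finset.mem_Icc.mp hj
        have hj0 : 1 ≤ j := le_trans hm' hj1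
        rw [weight1 j hj0, weight2 j, nxt_odd j hj0, nxt_even j,
          ((ih b j hj0).2 hj2 : _)]
        ring
      rw [Finset.sum_congr rfl step]
      have hFx : ∀ j ∈ Finset.Icc m' N, (j:ℂ)^(-a) * Fx N j b bs = Fx N j (a + b) bs :=
        fun j hj => Fx_shift N bs j (le_trans hm' (Finset.mem_Icc.mp hj).1) a b
      calc ∑ j ∈ Finset.Icc m' N,
            2 * (2 * ((j : ℂ) ^ (-a) * Uu N j b bs) - (j:ℂ)^(-a) * Fx N j b bs)
          = 2 * (2 * ∑ j ∈ Finset.Icc m' N, (j : ℂ) ^ (-a) * Uu N j b bs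
              - ∑ j ∈ Finset.Icc m' N, Fx N j (a+b) bs) := by
            rw [← Finset.sum_congr rfl hFx, mul_sub, Finset.mul_sum, Finset.mul_sum,
              Finset.mul_sum, ← Finset.sum_sub_distrib]
            exact Finset.sum_congr rfl fun j _ => by ring
        _ = 2 * Uu N m' a (b :: bs) := by rw [← Uu_eq_sum_Fx, Uu]
    refine ⟨key m hm, fun hmN => ?_⟩
    rw [Vv, sum_split_even _ m N hm hmN]
    have hV : ∑ k ∈ Finset.Icc (2*m-1) (2*N),
        (((k+1)/2 : ℕ) : ℂ) ^ (-a) * Vv N (nxt k) (b :: bs)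
        = Vv N (2 * m - 1) (a :: b :: bs) := by rw [Vv]
    rw [hV, key m hm, weight1 m hm, nxt_odd m hm, (ih b m hm).2 hmN, Fx,
      ← Fx_shift N bs m hm a b]
    ring



lemma fillIndex_length_le (l : List (Bool × ℂ)) : ∀ a : ℂ,
    (fillIndex a l).length ≤ l.length + 1 := by
  induction l with
  | nil => intro a; simp [fillIndex]
  | cons p rest ih =>
    intro a
    obtain ⟨b, c⟩ := p
    cases b
    · simpa [fillIndex] using Nat.le_succ_of_le (ih (a + c))
    · simpa [fillIndex] using ih c

lemma lemR (N : ℕ) : ∀ (n : ℕ) (t : Fin n → ℂ) (a : ℂ) (lo : ℕ),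
    2 * Uu N lo a (List.ofFn t) = ∑ c : Fin n → Bool,
      (-1 : ℂ) ^ ((n + 1) - (fillIndex a (List.ofFn fun j => (c j, t j))).length) *
        (2 : ℂ) ^ (fillIndex a (List.ofFn fun j => (c j, t j))).length *
        zetaStarNfrom N lo (fillIndex a (List.ofFn fun j => (c j, t j))) := by
  intro n
  induction n with
  | zero =>
    intro t a lo
    rw [Fintype.sum_unique]
    simp only [List.ofFn_zero, fillIndex, List.length_singleton, Nat.sub_self, pow_zero,
      one_mul, pow_one, zetaStarNfrom, Uu, mul_one]
  | succ n ih =>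
    intro t a lo
    rw [← (Fin.consEquiv (fun _ : Fin (n+1) => Bool)).sum_comp, Fintype.sum_prod_type]
    simp only [Fin.consEquiv, Equiv.coe_fn_mk]
    rw [Fintype.sum_bool]
    have hofn : ∀ (b : Bool) (c : Fin n → Bool),
        (List.ofFn fun j : Fin (n+1) => (Fin.cons (α := fun _ => Bool) b c j, t j))
          = (b, t 0) :: List.ofFn fun j : Fin n => (c j, t j.succ) := by
      intro b c
      rw [List.ofFn_succ]
      simp
    have htrue : ∑ c : Fin n → Bool,
        (-1 : ℂ) ^ ((n + 2) - (fillIndex a (List.ofFn fun j : Fin (n+1) =>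
            (Fin.cons (α := fun _ => Bool) true c j, t j))).length) *
          (2 : ℂ) ^ (fillIndex a (List.ofFn fun j : Fin (n+1) =>
            (Fin.cons (α := fun _ => Bool) true c j, t j))).length *
          zetaStarNfrom N lo (fillIndex a (List.ofFn fun j : Fin (n+1) =>
            (Fin.cons (α := fun _ => Bool) true c j, t j)))
        = 4 * ∑ m ∈ Finset.Icc lo N, (m : ℂ) ^ (-a) *
            Uu N m (t 0) (List.ofFn fun j : Fin n => t j.succ) := by
      have step : ∀ c : Fin n → Bool,
          (-1 : ℂ) ^ ((n + 2) - (fillIndex a (List.ofFn fun j : Fin (n+1) =>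
              (Fin.cons (α := fun _ => Bool) true c j, t j))).length) *
            (2 : ℂ) ^ (fillIndex a (List.ofFn fun j : Fin (n+1) =>
              (Fin.cons (α := fun _ => Bool) true c j, t j))).length *
            zetaStarNfrom N lo (fillIndex a (List.ofFn fun j : Fin (n+1) =>
              (Fin.cons (α := fun _ => Bool) true c j, t j)))
          = ∑ m ∈ Finset.Icc lo N, (m : ℂ) ^ (-a) * (2 *
              ((-1 : ℂ) ^ ((n + 1) - (fillIndex (t 0) (List.ofFn fun j : Fin n =>
                  (c j, t j.succ))).length) *
                (2 : ℂ) ^ (fillIndex (t 0) (List.ofFn fun j : Fin n =>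
                  (c j, t j.succ))).length *
                zetaStarNfrom N m (fillIndex (t 0) (List.ofFn fun j : Fin n =>
                  (c j, t j.succ))))) := by
        intro c
        rw [hofn true c]
        simp only [fillIndex, List.length_cons, zetaStarNfrom]
        rw [Nat.succ_sub_succ, Finset.mul_sum]
        apply Finset.sum_congr rfl
        intro m _
        rw [pow_succ]
        ring
      rw [Finset.sum_congr rfl fun c _ => step c, Finset.sum_comm]
      rw [Finset.mul_sum]
      apply Finset.sum_congr rfl
      intro m _
      rw [← Finset.mul_sum, ← Finset.mul_sum, ← ih (fun j => t j.succ) (t 0) m]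
      ring
    have hfalse : ∑ c : Fin n → Bool,
        (-1 : ℂ) ^ ((n + 2) - (fillIndex a (List.ofFn fun j : Fin (n+1) =>
            (Fin.cons (α := fun _ => Bool) false c j, t j))).length) *
          (2 : ℂ) ^ (fillIndex a (List.ofFn fun j : Fin (n+1) =>
            (Fin.cons (α := fun _ => Bool) false c j, t j))).length *
          zetaStarNfrom N lo (fillIndex a (List.ofFn fun j : Fin (n+1) =>
            (Fin.cons (α := fun _ => Bool) false c j, t j)))
        = -(2 * Uu N lo (a + t 0) (List.ofFn fun j : Fin n => t j.succ)) := by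
      rw [ih (fun j => t j.succ) (a + t 0) lo, ← Finset.sum_neg_distrib]
      apply Finset.sum_congr rfl
      intro c _
      rw [hofn false c]
      simp only [fillIndex]
      have hlen : (fillIndex (a + t 0) (List.ofFn fun j : Fin n =>
          (c j, t j.succ))).length ≤ n + 1 := by
        have h0 := fillIndex_length_le (List.ofFn fun j : Fin n => (c j, t j.succ)) (a + t 0)
        simpa using h0
      have hsub : (n + 2) - (fillIndex (a + t 0) (List.ofFn fun j : Fin n =>
          (c j, t j.succ))).length
          = ((n + 1) - (fillIndex (a + t 0) (List.ofFn fun j : Fin n =>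
            (c j, t j.succ))).length) + 1 := by omega
      rw [hsub, pow_succ]
      ring
    rw [htrue, hfalse, List.ofFn_succ, Uu]
    ring


def cnd (N lo : ℕ) {r : ℕ} (M : Fin r → ℕ) : Prop :=
  (∀ i, lo ≤ M i ∧ M i ≤ 2 * N) ∧ Monotone M ∧
    (∀ i j, i ≠ j → M i = M j → ¬ Odd (M i))

lemma le_nxt (k : ℕ) : k ≤ nxt k := by unfold nxt; split <;> omega

instance cnd_finite (N lo r : ℕ) : Finite {M : Fin r → ℕ // cnd N lo M} := by
  apply Finite.of_injective
    (fun M => (fun i => (⟨M.1 i, by have := (M.2.1 i).2; omega⟩ : Fin (2 * N + 1))))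
  intro M1 M2 h
  apply Subtype.ext; funext i
  exact congrArg Fin.val (congrFun h i)

lemma cnd_cons {N lo r : ℕ} {k : ℕ} {M' : Fin r → ℕ} :
    cnd N lo (Fin.cons k M') ↔ (lo ≤ k ∧ k ≤ 2 * N) ∧ cnd N (nxt k) M' := by
  constructor
  · rintro ⟨hb, hmono, hodd⟩
    have hk := hb 0
    rw [Fin.cons_zero] at hk
    refine ⟨hk, ⟨fun i => ?_, fun i j hij => ?_, fun i j hij heq => ?_⟩⟩
    · have h1 := hb i.succ
      rw [Fin.cons_succ] at h1
      have h2 : k ≤ M' i := by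
        have := hmono (Fin.zero_le i.succ)
        simpa using this
      refine ⟨?_, h1.2⟩
      by_cases ho : Odd k
      · have hne : M' i ≠ k := by
          intro he
          refine hodd 0 i.succ (Fin.succ_ne_zero i).symm ?_ ?_
          · rw [Fin.cons_zero, Fin.cons_succ, he]
          · rwa [Fin.cons_zero]
        unfold nxt; rw [if_pos ho]; omega
      · unfold nxt; rw [if_neg ho]; exact h2
    · have := hmono (Fin.succ_le_succ_iff.mpr hij)
      simpa using this
    · have := hodd i.succ j.succ (fun he => hij (Fin.succ_injective _ he))
        (by rwa [Fin.cons_succ, Fin.cons_succ])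
      rwa [Fin.cons_succ] at this
  · rintro ⟨⟨hlo, h2N⟩, hb', hmono', hodd'⟩
    refine ⟨fun i => ?_, fun i j hij => ?_, fun i j hij heq => ?_⟩
    · induction i using Fin.cases with
      | zero => rw [Fin.cons_zero]; exact ⟨hlo, h2N⟩
      | succ i' =>
        rw [Fin.cons_succ]
        have h1 := hb' i'
        have h2 := le_nxt k
        exact ⟨le_trans hlo (le_trans h2 h1.1), h1.2⟩
    · induction i using Fin.cases with
      | zero =>
        induction j using Fin.cases with
        | zero => exact le_refl _
        | succ j' =>
          rw [Fin.cons_zero, Fin.cons_succ]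
          exact le_trans (le_nxt k) (hb' j').1
      | succ i' =>
        induction j using Fin.cases with
        | zero =>
          exact absurd (le_antisymm hij (Fin.zero_le _)) (Fin.succ_ne_zero i')
        | succ j' =>
          rw [Fin.cons_succ, Fin.cons_succ]
          exact hmono' (Fin.succ_le_succ_iff.mp hij)
    · induction i using Fin.cases with
      | zero =>
        induction j using Fin.cases with
        | zero => exact absurd rfl hij
        | succ j' =>
          rw [Fin.cons_zero, Fin.cons_succ] at heq
          rw [Fin.cons_zero]
          intro ho
          have h1 := (hb' j').1
          unfold nxt at h1
          rw [if_pos ho] at h1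
          omega
      | succ i' =>
        induction j using Fin.cases with
        | zero =>
          rw [Fin.cons_succ, Fin.cons_zero] at heq
          rw [Fin.cons_succ, heq]
          intro ho
          have h1 := (hb' i').1
          unfold nxt at h1
          rw [if_pos ho] at h1
          omega
        | succ j' =>
          rw [Fin.cons_succ, Fin.cons_succ] at heq
          rw [Fin.cons_succ]
          exact hodd' i' j' (fun he => hij (congrArg Fin.succ he)) heq

def consE (N lo r : ℕ) :
    (Σ k : (Finset.Icc lo (2 * N) : Finset ℕ), {M' : Fin r → ℕ // cnd N (nxt k.1) M'})
      ≃ {M : Fin (r + 1) → ℕ // cnd N lo M} :=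
  Equiv.ofBijective
    (fun p => ⟨Fin.cons p.1.1 p.2.1, cnd_cons.mpr ⟨Finset.mem_Icc.mp p.1.2, p.2.2⟩⟩)
    (by
      constructor
      · rintro ⟨⟨k1, h1⟩, M1, g1⟩ ⟨⟨k2, h2⟩, M2, g2⟩ h
        have hc := congrArg Subtype.val h
        dsimp only at hc
        have hk : k1 = k2 := by
          have := congrFun hc 0; simpa using this
        subst hk
        have hM : M1 = M2 := funext fun i => by
          have := congrFun hc i.succ; simpa using this
        subst hM
        rfl
      · rintro ⟨M, hM⟩
        have hc : cnd N lo (Fin.cons (M 0) (Fin.tail M)) := by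
          rw [Fin.cons_self_tail]; exact hM
        exact ⟨⟨⟨M 0, Finset.mem_Icc.mpr (cnd_cons.mp hc).1⟩,
          ⟨Fin.tail M, (cnd_cons.mp hc).2⟩⟩, Subtype.ext (Fin.cons_self_tail M)⟩)

lemma lemT (N : ℕ) : ∀ (r : ℕ) (t : Fin r → ℂ) (lo : ℕ),
    (∑' M : {M : Fin r → ℕ // cnd N lo M},
        ∏ i, ((((M.1 i + 1) / 2 : ℕ)) : ℂ) ^ (-(t i)))
      = Vv N lo (List.ofFn t) := by
  intro r
  induction r with
  | zero =>
    intro t lo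
    have hcnd : cnd N lo (fun i : Fin 0 => 0) :=
      ⟨fun i => i.elim0, fun i j h => i.elim0, fun i j h h2 => i.elim0⟩
    haveI : Unique {M : Fin 0 → ℕ // cnd N lo M} :=
      ⟨⟨⟨fun i : Fin 0 => 0, hcnd⟩⟩, fun M => Subtype.ext (funext fun i => i.elim0)⟩
    rw [tsum_fintype, Fintype.sum_unique]
    simp [Vv]
  | succ r ih =>
    intro t lo
    rw [← (consE N lo r).tsum_eq, Summable.tsum_sigma' (fun _ => Summable.of_finite) Summable.of_finite]
    have inner : ∀ k : (Finset.Icc lo (2 * N) : Finset ℕ),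
        (∑' M' : {M' : Fin r → ℕ // cnd N (nxt k.1) M'},
            ∏ i : Fin (r + 1),
              (((((consE N lo r) ⟨k, M'⟩).1 i + 1) / 2 : ℕ) : ℂ) ^ (-(t i)))
          = (((k.1 + 1) / 2 : ℕ) : ℂ) ^ (-(t 0)) *
              Vv N (nxt k.1) (List.ofFn fun j : Fin r => t j.succ) := by
      intro k
      rw [← ih (fun j => t j.succ) (nxt k.1), ← tsum_mul_left]
      apply tsum_congr
      intro M'
      rw [Fin.prod_univ_succ]
      simp [consE]
      rfl
    rw [tsum_congr inner,
      Finset.tsum_subtype (Finset.Icc lo (2 * N))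
        (fun k : ℕ => (((k + 1) / 2 : ℕ) : ℂ) ^ (-(t 0)) *
          Vv N (nxt k) (List.ofFn fun j : Fin r => t j.succ)),
      List.ofFn_succ, Vv]

/-- **Dual decomposition of `ζ_{(r)}^{Q,N}` into truncated MZSVs.**
`ζ_{(r)}^{Q,N}(s_1,…,s_r) = Σ_ℓ (-1)^{r-dep(ℓ)} 2^{dep(ℓ)} ζ^{⋆,N}(ℓ)`, where
`ℓ` ranges over all compositions obtained from `(s_1,…,s_r)` by replacing each
separator by a comma or a plus. -/
theorem zetaQrowN_eq_sum_zetaStarN (N n : ℕ) (hN : 0 < N) (s : Fin (n + 1) → ℂ) :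
    zetaQrowN N (n + 1) s =
      ∑ c : Fin n → Bool,
        (-1 : ℂ) ^ ((n + 1) -
            (fillIndex (s 0) (List.ofFn fun j : Fin n => (c j, s j.succ))).length) *
          (2 : ℂ) ^ (fillIndex (s 0) (List.ofFn fun j : Fin n => (c j, s j.succ))).length *
          zetaStarN N (fillIndex (s 0) (List.ofFn fun j : Fin n => (c j, s j.succ))) := by
  have h1 : zetaQrowN N (n + 1) s = Vv N 1 (List.ofFn s) := lemT N (n + 1) s 1
  have h2 : Vv N 1 (List.ofFn s)
      = 2 * Uu N 1 (s 0) (List.ofFn fun j : Fin n => s j.succ) := by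
    rw [List.ofFn_succ]
    have h := (Vv_eq N (List.ofFn fun j : Fin n => s j.succ) (s 0) 1 le_rfl).1
    norm_num at h
    exact h
  have h3 := lemR N n (fun j => s j.succ) (s 0) 1
  rw [h1, h2, h3]
  rfl
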